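/- arXiv:1511.03186 — 7 statements merged into one kernel-verified Lean document; each statement's English description precedes it below -/
import Mathlib

section
/- Let p(x) = ∏_{i=1}^n (x − λ_i) with n ≥ 2 and real roots λ_1 ≥ λ_2 ≥ … ≥ λ_n. Let x^0 > λ_1 and define the Newton iterates x^{t+1} = x^t − p(x^t)/p'(x^t). Then x^t > λ_1 for every t ≥ 0 (so the iteration is well defined), and x^t − λ_1 ≤ (1 − 1/n)^t (x^0 − λ_1) for all t; in particular, for every ε ∈ (0,1) and every integer t ≥ n·ln((x^0 − λ_1)/ε), one has 0 ≤ x^t − λ_1 ≤ ε. -/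
lemma newton_step (n : ℕ) (hn : 2 ≤ n) (lam : Fin n → ℝ) (hlam : Antitone lam)
    (p : ℝ → ℝ) (hp : ∀ y : ℝ, p y = ∏ i, (y - lam i))
    (c : ℝ) (hc : lam ⟨0, lt_of_lt_of_le two_pos hn⟩ < c) :
    lam ⟨0, lt_of_lt_of_le two_pos hn⟩ < c - p c / deriv p c ∧
      (c - p c / deriv p c) - lam ⟨0, lt_of_lt_of_le two_pos hn⟩ ≤
        (1 - 1 / (n : ℝ)) * (c - lam ⟨0, lt_of_lt_of_le two_pos hn⟩) := by
  set i0 : Fin n := ⟨0, lt_of_lt_of_le two_pos hn⟩ with hi0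
  have hpos : ∀ i : Fin n, 0 < c - lam i := by
    intro i
    have : lam i ≤ lam i0 := hlam (by simp [hi0, Fin.le_def])
    linarith
  have hpfun : p = fun y => ∏ i, (y - lam i) := funext hp
  -- derivative
  have hderiv : deriv p c = ∑ i, ∏ j ∈ Finset.univ.erase i, (c - lam j) := by
    rw [hpfun]
    have h := deriv_finset_prod (𝕜 := ℝ) (f := fun i : Fin n => fun y => y - lam i)
      (u := Finset.univ) (x := c)
      (fun i _ => (differentiable_id.sub_const (lam i)).differentiableAt)
    simp only [smul_eq_mul] at h
    convert h using 2
    · rfl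
    · rfl
    · ext y; simp [Finset.prod_apply]
    · simp [deriv_sub_const]
  set P := ∏ i, (c - lam i) with hP
  set S := ∑ i, (c - lam i)⁻¹ with hS
  have hPpos : 0 < P := Finset.prod_pos (fun i _ => hpos i)
  have hDP : deriv p c = P * S := by
    rw [hderiv, hS, Finset.mul_sum]
    refine Finset.sum_congr rfl fun i _ => ?_
    have h := Finset.prod_erase_mul Finset.univ (fun j => c - lam j) (Finset.mem_univ i)
    rw [hP, ← h]
    rw [mul_inv_cancel_right₀ (hpos i).ne']
  have hSlb : (c - lam i0)⁻¹ < S := by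
    have hne : (⟨1, by omega⟩ : Fin n) ≠ i0 := by simp [hi0, Fin.ext_iff]
    exact Finset.single_lt_sum hne (Finset.mem_univ i0) (Finset.mem_univ _)
      (inv_pos.2 (hpos _)) (fun k _ _ => (inv_pos.2 (hpos k)).le)
  have hSpos : 0 < S := lt_trans (inv_pos.2 (hpos i0)) hSlb
  have hratio : p c / deriv p c = S⁻¹ := by
    rw [hp c, hDP, ← hP, div_mul_eq_div_div, div_self hPpos.ne', one_div]
  have hlt : S⁻¹ < c - lam i0 := by
    have := inv_strictAnti₀ (inv_pos.2 (hpos i0)) hSlb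
    rwa [inv_inv] at this
  have hSub : S ≤ (n : ℝ) * (c - lam i0)⁻¹ := by
    have : S ≤ ∑ _i : Fin n, (c - lam i0)⁻¹ := by
      refine Finset.sum_le_sum fun i _ => ?_
      exact inv_anti₀ (hpos i0) (by have : lam i ≤ lam i0 := hlam (by simp [hi0, Fin.le_def]); linarith)
    simpa [Finset.sum_const, Finset.card_univ, nsmul_eq_mul] using this
  have hn' : (2 : ℝ) ≤ (n : ℝ) := by exact_mod_cast hn
  have hinvge : (c - lam i0) / n ≤ S⁻¹ := by
    have h := inv_anti₀ hSpos hSub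
    rwa [mul_inv, inv_inv, ← div_eq_inv_mul] at h
  constructor
  · rw [hratio]; linarith
  · rw [hratio]
    have : (1 - 1 / (n : ℝ)) * (c - lam i0) = (c - lam i0) - (c - lam i0) / n := by
      field_simp
    rw [this]; linarith

/-- convergence of the Newton iteration for the largest root. -/
theorem newton_iteration_convergence
    (n : ℕ) (hn : 2 ≤ n) (lam : Fin n → ℝ) (hlam : Antitone lam)
    (p : ℝ → ℝ) (hp : ∀ y : ℝ, p y = ∏ i, (y - lam i))
    (x : ℕ → ℝ) (hx0 : lam ⟨0, by omega⟩ < x 0)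
    (hrec : ∀ t : ℕ, x (t + 1) = x t - p (x t) / deriv p (x t)) :
    (∀ t : ℕ, lam ⟨0, by omega⟩ < x t) ∧
      (∀ t : ℕ, x t - lam ⟨0, by omega⟩ ≤
        (1 - 1 / (n : ℝ)) ^ t * (x 0 - lam ⟨0, by omega⟩)) ∧
      ∀ ε : ℝ, 0 < ε → ε < 1 →
        ∀ t : ℕ, (n : ℝ) * Real.log ((x 0 - lam ⟨0, by omega⟩) / ε) ≤ (t : ℝ) →
          0 ≤ x t - lam ⟨0, by omega⟩ ∧ x t - lam ⟨0, by omega⟩ ≤ ε := by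
  set lam0 := lam ⟨0, by omega⟩ with hlam0
  have hn' : (2 : ℝ) ≤ (n : ℝ) := by exact_mod_cast hn
  have hq0 : 0 ≤ 1 - 1 / (n : ℝ) := by
    rw [sub_nonneg, div_le_one (by linarith)]; linarith
  have hpart1 : ∀ t, lam0 < x t := by
    intro t
    induction t with
    | zero => exact hx0
    | succ t ih =>
      rw [hrec t]
      exact (newton_step n hn lam hlam p hp (x t) ih).1
  have hpart2 : ∀ t, x t - lam0 ≤ (1 - 1 / (n : ℝ)) ^ t * (x 0 - lam0) := by
    intro t
    induction t with
    | zero => simp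
    | succ t ih =>
      have hstep := (newton_step n hn lam hlam p hp (x t) (hpart1 t)).2
      rw [← hrec t] at hstep
      calc x (t + 1) - lam0 ≤ (1 - 1 / (n : ℝ)) * (x t - lam0) := hstep
        _ ≤ (1 - 1 / (n : ℝ)) * ((1 - 1 / (n : ℝ)) ^ t * (x 0 - lam0)) :=
            mul_le_mul_of_nonneg_left ih hq0
        _ = (1 - 1 / (n : ℝ)) ^ (t + 1) * (x 0 - lam0) := by ring
  refine ⟨hpart1, hpart2, ?_⟩
  intro ε hε0 hε1 t ht
  have hx0pos : 0 < x 0 - lam0 := by have := hpart1 0; linarith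
  refine ⟨(sub_pos.2 (hpart1 t)).le, ?_⟩
  have hqpos : 0 < 1 - 1 / (n : ℝ) := by
    rw [sub_pos, div_lt_one (by linarith)]; linarith
  have hlog : Real.log (1 - 1 / (n : ℝ)) ≤ -(1 / (n : ℝ)) := by
    have := Real.log_le_sub_one_of_pos hqpos
    linarith
  have hkey : (1 - 1 / (n : ℝ)) ^ t ≤ ε / (x 0 - lam0) := by
    rw [← Real.exp_log hqpos, ← Real.exp_nat_mul]
    rw [← Real.exp_log (show (0:ℝ) < ε / (x 0 - lam0) from div_pos hε0 hx0pos)]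
    apply Real.exp_le_exp.2
    have h1 : (t : ℝ) * Real.log (1 - 1 / (n : ℝ)) ≤ (t : ℝ) * (-(1 / (n : ℝ))) :=
      mul_le_mul_of_nonneg_left hlog (Nat.cast_nonneg t)
    have h2 : Real.log (ε / (x 0 - lam0)) = - Real.log ((x 0 - lam0) / ε) := by
      rw [← Real.log_inv, inv_div]
    rw [h2]
    have h3 : Real.log ((x 0 - lam0) / ε) ≤ (t : ℝ) / n := by
      rw [le_div_iff₀ (by linarith : (0:ℝ) < (n:ℝ))]
      linarith [mul_comm ((n:ℝ)) (Real.log ((x 0 - lam0) / ε))]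
    have h4 : (t : ℝ) * (-(1 / (n : ℝ))) = -((t : ℝ) / n) := by ring
    linarith
  calc x t - lam0 ≤ (1 - 1 / (n : ℝ)) ^ t * (x 0 - lam0) := hpart2 t
    _ ≤ (ε / (x 0 - lam0)) * (x 0 - lam0) := mul_le_mul_of_nonneg_right hkey hx0pos.le
    _ = ε := div_mul_cancel₀ ε hx0pos.ne'
end

section
/- Fix real numbers λ_1 ≥ λ_2 ≥ … ≥ λ_n with n ≥ 1, an integer k ≥ 2, and x > λ_1, and define g_m(x) = Σ_{i=1}^n 1/(x − λ_i)^m. Then (x − λ_1) ≤ g_{k−1}(x)/g_k(x) ≤ n^{1/k} · (x − λ_1). -/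
/-- `(x − λ₁) ≤ g_{k−1}(x)/g_k(x) ≤ n^{1/k} (x − λ₁)` for `x > λ₁`. -/
theorem moment_ratio_bounds
    (n : ℕ) (hn : 0 < n) (lam : Fin n → ℝ) (hlam : Antitone lam)
    (k : ℕ) (hk : 2 ≤ k) (x : ℝ) (hx : lam ⟨0, hn⟩ < x)
    (g : ℕ → ℝ → ℝ) (hg : ∀ (m : ℕ) (y : ℝ), g m y = ∑ i, 1 / (y - lam i) ^ m) :
    x - lam ⟨0, hn⟩ ≤ g (k - 1) x / g k x ∧
      g (k - 1) x / g k x ≤ (n : ℝ) ^ ((1 : ℝ) / k) * (x - lam ⟨0, hn⟩) := by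
  set d0 : ℝ := x - lam ⟨0, hn⟩ with hd0def
  have hd0 : 0 < d0 := sub_pos.mpr hx
  have hdle : ∀ i : Fin n, d0 ≤ x - lam i := fun i =>
    sub_le_sub_left (hlam (by exact Fin.mk_le_of_le_val (Nat.zero_le _))) x
  have hd : ∀ i : Fin n, 0 < x - lam i := fun i => lt_of_lt_of_le hd0 (hdle i)
  have hK2 : (2:ℝ) ≤ (k:ℝ) := by exact_mod_cast hk
  have hKm1pos : (0:ℝ) < (k:ℝ) - 1 := by linarith
  have hKpos : (0:ℝ) < (k:ℝ) := by linarith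
  have hKm1cast : ((k - 1 : ℕ) : ℝ) = (k:ℝ) - 1 := by
    have h1k : 1 ≤ k := le_trans (by norm_num) hk
    push_cast [Nat.cast_sub h1k]
    ring
  set p : ℝ := (k:ℝ) / ((k:ℝ) - 1) with hp_def
  have hp1 : 1 ≤ p := by
    rw [hp_def, le_div_iff₀ hKm1pos]; linarith
  have hppos : 0 < p := lt_of_lt_of_le one_pos hp1
  have huniv : (Finset.univ : Finset (Fin n)).Nonempty :=
    Finset.univ_nonempty_iff.mpr (Fin.pos_iff_nonempty.mp hn)
  have hApos : 0 < g k x := by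
    rw [hg]
    exact Finset.sum_pos (fun i _ => by have := hd i; positivity) huniv
  have hBpos : 0 < g (k-1) x := by
    rw [hg]
    exact Finset.sum_pos (fun i _ => by have := hd i; positivity) huniv
  -- lower bound
  have hlow : d0 ≤ g (k-1) x / g k x := by
    rw [le_div_iff₀ hApos, hg, hg, Finset.mul_sum]
    apply Finset.sum_le_sum
    intro i _
    have hdi := hd i
    have hkk : (x - lam i) ^ k = (x - lam i) ^ (k-1) * (x - lam i) := by
      rw [← pow_succ]; congr 1; omega
    calc d0 * (1/(x - lam i)^k) ≤ (x - lam i) * (1/(x - lam i)^k) :=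
          mul_le_mul_of_nonneg_right (hdle i) (by positivity)
      _ = 1/(x - lam i)^(k-1) := by
          rw [hkk]; field_simp
  refine ⟨hlow, ?_⟩
  -- upper bound
  have hterm : ∀ i : Fin n, (1/(x - lam i)^(k-1) : ℝ) ^ p = 1/(x - lam i)^k := by
    intro i
    have hdi := hd i
    have h1 : (1/(x - lam i)^(k-1) : ℝ) = (x - lam i) ^ (-(((k:ℝ)-1))) := by
      rw [Real.rpow_neg hdi.le, ← hKm1cast, Real.rpow_natCast, one_div]
    have h2 : (1/(x - lam i)^k : ℝ) = (x - lam i) ^ (-(k:ℝ)) := by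
      rw [Real.rpow_neg hdi.le, Real.rpow_natCast, one_div]
    rw [h1, h2, ← Real.rpow_mul hdi.le]
    congr 1
    rw [hp_def]
    field_simp
  have key : (g (k-1) x) ^ p ≤ (n:ℝ)^(p-1) * g k x := by
    rw [hg, hg]
    have h := Real.rpow_sum_le_const_mul_sum_rpow_of_nonneg (s := (Finset.univ : Finset (Fin n)))
      (f := fun i => 1/(x - lam i)^(k-1)) hp1 (fun i _ => by have := hd i; positivity)
    simpa only [hterm, Finset.card_univ, Fintype.card_fin] using h
  have hKne : (k:ℝ) ≠ 0 := hKpos.ne'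
  have hKm1ne : (k:ℝ) - 1 ≠ 0 := hKm1pos.ne'
  have hnpos : (0:ℝ) < n := by exact_mod_cast hn
  have e1 : (p - 1) * (1/p) = 1/(k:ℝ) := by
    rw [hp_def]; field_simp; ring
  have e2 : 1/p = ((k:ℝ)-1)/(k:ℝ) := by
    rw [hp_def, one_div_div]
  have hBle : g (k-1) x ≤ (n:ℝ)^((1:ℝ)/k) * (g k x) ^ (((k:ℝ)-1)/(k:ℝ)) := by
    have h := Real.rpow_le_rpow (by positivity) key (by positivity : (0:ℝ) ≤ 1/p)
    calc g (k-1) x = (g (k-1) x ^ p) ^ (1/p) := by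
          rw [← Real.rpow_mul hBpos.le, mul_one_div_cancel hppos.ne', Real.rpow_one]
      _ ≤ ((n:ℝ)^(p-1) * g k x) ^ (1/p) := h
      _ = (n:ℝ)^((1:ℝ)/k) * (g k x) ^ (((k:ℝ)-1)/(k:ℝ)) := by
          rw [Real.mul_rpow (by positivity) hApos.le, ← Real.rpow_mul hnpos.le, e1, e2]
  have hA1 : d0 ^ (-(k:ℝ)) ≤ g k x := by
    rw [hg]
    have hrw : d0 ^ (-(k:ℝ)) = 1/(x - lam ⟨0, hn⟩)^k := by
      rw [Real.rpow_neg hd0.le, Real.rpow_natCast, one_div]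
    rw [hrw]
    exact Finset.single_le_sum (f := fun i : Fin n => 1/(x - lam i)^k)
      (fun i _ => by have := hd i; positivity) (Finset.mem_univ _)
  have hA2 : (g k x) ^ ((-1:ℝ)/(k:ℝ)) ≤ d0 := by
    have hz : (-1:ℝ)/(k:ℝ) ≤ 0 := by
      rw [neg_div]
      exact neg_nonpos.mpr (by positivity)
    have h := Real.rpow_le_rpow_of_nonpos (by positivity) hA1 hz
    calc (g k x) ^ ((-1:ℝ)/(k:ℝ)) ≤ (d0 ^ (-(k:ℝ))) ^ ((-1:ℝ)/(k:ℝ)) := h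
      _ = d0 := by
          rw [← Real.rpow_mul hd0.le,
            show (-(k:ℝ)) * ((-1:ℝ)/(k:ℝ)) = 1 by field_simp, Real.rpow_one]
  have hfin : g (k-1) x / g k x ≤ (n:ℝ)^((1:ℝ)/k) * (g k x) ^ ((-1:ℝ)/(k:ℝ)) := by
    rw [div_le_iff₀ hApos]
    calc g (k-1) x ≤ (n:ℝ)^((1:ℝ)/k) * (g k x) ^ (((k:ℝ)-1)/(k:ℝ)) := hBle
      _ = (n:ℝ)^((1:ℝ)/k) * (g k x) ^ ((-1:ℝ)/(k:ℝ)) * g k x := by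
          rw [mul_assoc]
          congr 1
          rw [← Real.rpow_add_one hApos.ne' ((-1:ℝ)/(k:ℝ))]
          congr 1
          field_simp
          ring
  calc g (k-1) x / g k x ≤ (n:ℝ)^((1:ℝ)/k) * (g k x) ^ ((-1:ℝ)/(k:ℝ)) := hfin
    _ ≤ (n:ℝ)^((1:ℝ)/k) * d0 := mul_le_mul_of_nonneg_left hA2 (by positivity)
end

section
/- Fix real numbers λ_1 ≥ λ_2 ≥ … ≥ λ_n with n ≥ 2 and an integer k ≥ 2, and define g_m(x) = Σ_{i=1}^n 1/(x − λ_i)^m for x > λ_1. Let x^0 > λ_1 and define the accelerated iteration x^{t+1} = x^t − (1/n^{1/k}) · g_{k−1}(x^t)/g_k(x^t). Then x^t > λ_1 for every t ≥ 0 (so the iteration is well defined), and x^t − λ_1 ≤ (1 − 1/n^{1/k})^t · (x^0 − λ_1) for all t ≥ 0. -/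
open Finset Real

lemma holder_key {n k : ℕ} (hn : 2 ≤ n) (hk : 2 ≤ k) (a : Fin n → ℝ) (ha : ∀ i, 0 < a i) :
    ∑ i, a i ^ (k - 1) ≤ (n : ℝ) ^ ((1 : ℝ) / k) * (∑ i, a i ^ k) ^ (1 - (1 : ℝ) / k) := by
  have hk0 : (0 : ℝ) < k := by positivity
  have hkm : (0 : ℝ) < (k : ℝ) - 1 := by
    have : (2 : ℝ) ≤ k := by exact_mod_cast hk
    linarith
  have hpq : Real.HolderConjugate ((k : ℝ) / (k - 1)) k := by
    constructor
    · rw [inv_div, inv_one, ← one_div, ← add_div, sub_add_cancel, div_self hk0.ne']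
    · exact div_pos hk0 hkm
    · exact hk0
  have := Real.inner_le_Lp_mul_Lq_of_nonneg (univ : Finset (Fin n))
    (f := fun i => a i ^ (k - 1)) (g := fun _ => (1 : ℝ)) hpq
    (fun i _ => (pow_pos (ha i) _).le) (fun i _ => by norm_num)
  simp only [mul_one] at this
  have e1 : ∀ i : Fin n, (a i ^ (k - 1)) ^ ((k : ℝ) / (k - 1)) = a i ^ k := by
    intro i
    rw [← Real.rpow_natCast (a i) (k - 1), ← Real.rpow_mul (ha i).le]
    have : ((k - 1 : ℕ) : ℝ) = (k : ℝ) - 1 := by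
      have : (1 : ℕ) ≤ k := by omega
      push_cast [this]; ring
    rw [this, mul_div_cancel₀ _ (ne_of_gt hkm), Real.rpow_natCast]
  have e2 : ((1 : ℝ)) ^ (k : ℝ) = 1 := Real.one_rpow _
  simp only [e1, e2, Finset.sum_const, Finset.card_univ, Fintype.card_fin, nsmul_eq_mul,
    mul_one] at this
  calc ∑ i, a i ^ (k - 1) ≤ (∑ i, a i ^ k) ^ (1 / ((k : ℝ) / (k - 1))) * (n : ℝ) ^ (1 / (k : ℝ)) :=
        this
    _ = (n : ℝ) ^ ((1 : ℝ) / k) * (∑ i, a i ^ k) ^ (1 - (1 : ℝ) / k) := by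
        rw [mul_comm]
        congr 1
        rw [one_div_div]
        congr 1
        field_simp

lemma step_key {n k : ℕ} (hn : 2 ≤ n) (hk : 2 ≤ k) (h0 : 0 < n)
    (lam : Fin n → ℝ) (hlam : Antitone lam)
    (y : ℝ) (hy : lam ⟨0, h0⟩ < y) :
    0 < ∑ i, (1 : ℝ) / (y - lam i) ^ k ∧
    (y - lam ⟨0, h0⟩) * ∑ i, (1 : ℝ) / (y - lam i) ^ k ≤ ∑ i, (1 : ℝ) / (y - lam i) ^ (k - 1) ∧
    (∑ i, (1 : ℝ) / (y - lam i) ^ (k - 1)) <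
      (n : ℝ) ^ ((1 : ℝ) / k) * ((y - lam ⟨0, h0⟩) * ∑ i, (1 : ℝ) / (y - lam i) ^ k) := by
  have hn0 : 0 < n := h0
  set l := lam ⟨0, h0⟩ with hl
  have hle : ∀ i : Fin n, lam i ≤ l := fun i => hlam (by simp [Fin.le_def])
  have hpos : ∀ i : Fin n, 0 < y - lam i := fun i => by have := hle i; linarith
  set a : Fin n → ℝ := fun i => (y - lam i)⁻¹ with hadef
  have ha : ∀ i, 0 < a i := fun i => inv_pos.2 (hpos i)
  have hsum : ∀ m : ℕ, ∑ i, (1 : ℝ) / (y - lam i) ^ m = ∑ i, a i ^ m := by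
    intro m; apply Finset.sum_congr rfl; intro i _
    rw [one_div, ← inv_pow]
  have hab : ∀ i, a i ≤ (y - l)⁻¹ := by
    intro i
    exact inv_anti₀ (by linarith) (by have := hle i; linarith)
  have hS : 0 < ∑ i, a i ^ k := Finset.sum_pos (fun i _ => pow_pos (ha i) k) ⟨⟨0, hn0⟩, mem_univ _⟩
  have hyl : 0 < y - l := by linarith
  -- strict: (y-l)⁻¹ ^ k < ∑ a^k
  have hi0 : a ⟨0, hn0⟩ = (y - l)⁻¹ := rfl
  have hstrict : ((y - l)⁻¹) ^ k < ∑ i, a i ^ k := by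
    rw [← hi0]
    exact Finset.single_lt_sum (i := (⟨0, hn0⟩ : Fin n)) (j := (⟨1, by omega⟩ : Fin n))
      (by simp [Fin.ext_iff]) (mem_univ _) (mem_univ _) (pow_pos (ha _) k)
      (fun i _ _ => (pow_pos (ha i) k).le)
  constructor
  · rw [hsum]; exact hS
  constructor
  · rw [hsum, hsum]
    rw [Finset.mul_sum]
    apply Finset.sum_le_sum
    intro i _
    have h1 : a i ^ (k - 1) = (y - lam i) * a i ^ k := by
      obtain ⟨m, rfl⟩ : ∃ m, k = m + 1 := ⟨k - 1, by omega⟩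
      simp only [Nat.add_sub_cancel, pow_succ]
      have h2 : (y - lam i) * a i = 1 := by
        rw [hadef]; exact mul_inv_cancel₀ (ne_of_gt (hpos i))
      linear_combination (-(a i ^ m)) * h2
    rw [h1]
    have := hle i
    nlinarith [pow_pos (ha i) k]
  · rw [hsum, hsum]
    have hH := holder_key hn hk a ha
    set S := ∑ i, a i ^ k with hSdef
    have hSk : S ^ ((1 : ℝ)/k) > (y - l)⁻¹ := by
      have h1 : (((y - l)⁻¹) ^ k) ^ ((1 : ℝ)/k) = (y - l)⁻¹ := by
        rw [← Real.rpow_natCast ((y-l)⁻¹) k, ← Real.rpow_mul (by positivity)]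
        rw [mul_one_div, div_self (by positivity : (k:ℝ) ≠ 0), Real.rpow_one]
      rw [← h1]
      apply Real.rpow_lt_rpow (by positivity) hstrict (by positivity)
    have hfin : S ^ (1 - (1:ℝ)/k) < (y - l) * S := by
      rw [Real.rpow_sub hS, Real.rpow_one]
      rw [div_lt_iff₀ (by positivity : (0:ℝ) < S ^ ((1:ℝ)/k))]
      calc S = (y - l) * S * (y - l)⁻¹ := by field_simp
        _ < (y - l) * S * S ^ ((1:ℝ)/k) := mul_lt_mul_of_pos_left hSk (by positivity)
    calc ∑ i, a i ^ (k - 1) ≤ (n : ℝ) ^ ((1 : ℝ) / k) * S ^ (1 - (1 : ℝ) / k) := hH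
      _ < (n : ℝ) ^ ((1 : ℝ) / k) * ((y - l) * S) := by
          apply mul_lt_mul_of_pos_left hfin (by positivity)


/-- convergence of the accelerated (k-th order) Newton iteration. -/
theorem accelerated_newton_convergence
    (n : ℕ) (hn : 2 ≤ n) (lam : Fin n → ℝ) (hlam : Antitone lam)
    (k : ℕ) (hk : 2 ≤ k)
    (g : ℕ → ℝ → ℝ) (hg : ∀ (m : ℕ) (y : ℝ), g m y = ∑ i, 1 / (y - lam i) ^ m)
    (x : ℕ → ℝ) (hx0 : lam ⟨0, by omega⟩ < x 0)
    (hrec : ∀ t : ℕ, x (t + 1) =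
      x t - (1 / (n : ℝ) ^ ((1 : ℝ) / k)) * (g (k - 1) (x t) / g k (x t))) :
    ∀ t : ℕ, lam ⟨0, by omega⟩ < x t ∧
      x t - lam ⟨0, by omega⟩ ≤
        (1 - 1 / (n : ℝ) ^ ((1 : ℝ) / k)) ^ t * (x 0 - lam ⟨0, by omega⟩) := by
  have h0 : 0 < n := by omega
  suffices h : ∀ t : ℕ, lam ⟨0, h0⟩ < x t ∧
      x t - lam ⟨0, h0⟩ ≤
        (1 - 1 / (n : ℝ) ^ ((1 : ℝ) / k)) ^ t * (x 0 - lam ⟨0, h0⟩) from h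
  have hx0' : lam ⟨0, h0⟩ < x 0 := hx0
  set l := lam ⟨0, h0⟩ with hl
  have hcpos : 0 < (n : ℝ) ^ ((1 : ℝ) / k) := Real.rpow_pos_of_pos (by positivity) _
  have hc1 : (1 : ℝ) ≤ (n : ℝ) ^ ((1 : ℝ) / k) :=
    Real.one_le_rpow (by exact_mod_cast Nat.one_le_of_lt hn) (by positivity)
  set c : ℝ := 1 / (n : ℝ) ^ ((1 : ℝ) / k) with hc
  have hc0 : 0 < c := by positivity
  have hcle : c ≤ 1 := by
    rw [hc, div_le_one hcpos]; exact hc1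
  have hcmul : c * (n : ℝ) ^ ((1 : ℝ) / k) = 1 := by
    rw [hc]; field_simp
  intro t
  induction t with
  | zero => exact ⟨hx0', by simp⟩
  | succ t ih =>
    obtain ⟨h1, h2⟩ := ih
    obtain ⟨hS, hlow, hhigh⟩ := step_key hn hk h0 lam hlam (x t) h1
    set S : ℝ := ∑ i, (1 : ℝ) / (x t - lam i) ^ k with hSd
    set T : ℝ := ∑ i, (1 : ℝ) / (x t - lam i) ^ (k - 1) with hTd
    have hxrec : x (t + 1) = x t - c * (T / S) := by
      rw [hrec t, hg, hg]
    have hTS_lt : T / S < (n : ℝ) ^ ((1 : ℝ) / k) * (x t - l) := by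
      rw [div_lt_iff₀ hS]
      calc T < (n : ℝ) ^ ((1 : ℝ) / k) * ((x t - l) * S) := hhigh
        _ = (n : ℝ) ^ ((1 : ℝ) / k) * (x t - l) * S := by ring
    have hTS_ge : x t - l ≤ T / S := by
      rw [le_div_iff₀ hS]
      calc (x t - l) * S = (x t - l) * S := rfl
        _ ≤ T := hlow
    have hup : c * (T / S) < x t - l := by
      calc c * (T / S) < c * ((n : ℝ) ^ ((1 : ℝ) / k) * (x t - l)) :=
            mul_lt_mul_of_pos_left hTS_lt hc0
        _ = (c * (n : ℝ) ^ ((1 : ℝ) / k)) * (x t - l) := by ring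
        _ = x t - l := by rw [hcmul, one_mul]
    have hdown : c * (x t - l) ≤ c * (T / S) := mul_le_mul_of_nonneg_left hTS_ge hc0.le
    constructor
    · rw [hxrec]; linarith
    · rw [hxrec]
      have : x t - c * (T / S) - l ≤ (1 - c) * (x t - l) := by linarith
      calc x t - c * (T / S) - l ≤ (1 - c) * (x t - l) := this
        _ ≤ (1 - c) * ((1 - c) ^ t * (x 0 - l)) :=
            mul_le_mul_of_nonneg_left h2 (by linarith)
        _ = (1 - c) ^ (t + 1) * (x 0 - l) := by ring
end

section
/- Let p(x) = ∏_{i=1}^n (x − λ_i) with real roots λ_1 ≥ λ_2 ≥ … ≥ λ_n, let x > λ_1, set ξ = 1/(x − λ_1), and let α > 0 satisfy α·n·ξ < 1. Then (p(x+α) − p(x))/α ≤ p'(x) + p(x) · (α·n²·ξ²)/(1 − α·n·ξ). -/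
/-- upper bound on the forward difference of `p` in terms of
`ξ = 1/(x − λ₁)` when `α·n·ξ < 1`. -/
theorem forward_difference_upper_bound
    (n : ℕ) (hn : 0 < n) (lam : Fin n → ℝ) (hlam : Antitone lam)
    (p : ℝ → ℝ) (hp : ∀ y : ℝ, p y = ∏ i, (y - lam i))
    (x : ℝ) (hx : lam ⟨0, hn⟩ < x)
    (ξ : ℝ) (hξ : ξ = 1 / (x - lam ⟨0, hn⟩))
    (α : ℝ) (hα : 0 < α) (hsmall : α * n * ξ < 1) :
    (p (x + α) - p x) / α ≤
      deriv p x + p x * (α * (n : ℝ) ^ 2 * ξ ^ 2 / (1 - α * n * ξ)) := by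
  have hpfun : p = fun y => ∏ i, (y - lam i) := funext hp
  have hD : 0 < x - lam ⟨0, hn⟩ := sub_pos.mpr hx
  have hdi : ∀ i, 0 < x - lam i := fun i => by
    have : lam i ≤ lam ⟨0, hn⟩ := hlam (Fin.le_def.mpr (Nat.zero_le _))
    linarith
  have hξpos : 0 < ξ := by rw [hξ]; positivity
  have hξi : ∀ i, 1 / (x - lam i) ≤ ξ := fun i => by
    rw [hξ]
    exact one_div_le_one_div_of_le hD (by
      have : lam i ≤ lam ⟨0, hn⟩ := hlam (Fin.le_def.mpr (Nat.zero_le _)); linarith)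
  set P : ℝ := ∏ i, (x - lam i) with hP
  have hPpos : 0 < P := Finset.prod_pos fun i _ => hdi i
  set Q : ℝ := ∑ i : Fin n, 1 / (x - lam i) with hQ
  have hQpos : 0 < Q := by
    have : Nonempty (Fin n) := Fin.pos_iff_nonempty.mp hn
    exact Finset.sum_pos (fun i _ => one_div_pos.mpr (hdi i)) Finset.univ_nonempty
  set T : ℝ := α * n * ξ with hT
  have hTpos : 0 < T := by
    rw [hT]; have : (0:ℝ) < n := Nat.cast_pos.mpr hn; positivity
  have hQT : α * Q ≤ T := by
    rw [hT, hQ]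
    have h := Finset.sum_le_sum (fun i (_ : i ∈ Finset.univ) => hξi i)
    simp only [Finset.sum_const, Finset.card_univ, Fintype.card_fin, nsmul_eq_mul] at h
    nlinarith
  have hSpos : 0 < α * Q := by positivity
  have hS1 : α * Q < 1 := lt_of_le_of_lt hQT hsmall
  have h1S : 0 < 1 - α * Q := by linarith
  have h1T : 0 < 1 - T := by linarith
  -- A : p (x + α) = P * ∏ (1 + α / (x - lam i))
  have hA : p (x + α) = P * ∏ i, (1 + α / (x - lam i)) := by
    rw [hp, hP, ← Finset.prod_mul_distrib]
    refine Finset.prod_congr rfl fun i _ => ?_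
    have := (hdi i).ne'
    field_simp
    ring
  -- B : deriv p x = P * Q
  have hB : deriv p x = P * Q := by
    rw [hpfun]
    have hder : ∀ i ∈ Finset.univ, DifferentiableAt ℝ (fun y : ℝ => y - lam i) x :=
      fun i _ => (differentiable_id.sub_const _).differentiableAt
    rw [deriv_fun_finsetProd hder, hP, hQ, Finset.mul_sum]
    refine Finset.sum_congr rfl fun i _ => ?_
    have hd1 : deriv (fun y : ℝ => y - lam i) x = 1 := by
      simp [deriv_sub_const]
    rw [hd1, smul_eq_mul, mul_one, ← Finset.mul_prod_erase _ _ (Finset.mem_univ i)]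
    rw [mul_one_div, mul_comm, mul_div_assoc, div_self (hdi i).ne', mul_one]
  -- C : product bound
  have hC : (∏ i, (1 + α / (x - lam i))) ≤ (1 - α * Q)⁻¹ := by
    have h1 : (∏ i, (1 + α / (x - lam i))) ≤ ∏ i, Real.exp (α / (x - lam i)) := by
      refine Finset.prod_le_prod (fun i _ => ?_) fun i _ => ?_
      · have := div_pos hα (hdi i); linarith
      · have := Real.add_one_le_exp (α / (x - lam i)); linarith
    have h2 : (∏ i, Real.exp (α / (x - lam i))) = Real.exp (α * Q) := by
      rw [← Real.exp_sum, hQ, Finset.mul_sum]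
      congr 1
      exact Finset.sum_congr rfl fun i _ => by ring
    have h3 : Real.exp (α * Q) ≤ (1 - α * Q)⁻¹ := by
      have hneg := Real.add_one_le_exp (-(α * Q))
      rw [Real.exp_neg] at hneg
      have hepos : 0 < Real.exp (α * Q) := Real.exp_pos _
      have hinvpos : 0 < (1 - α * Q)⁻¹ := by positivity
      have hmul : Real.exp (α * Q) * (1 - α * Q) ≤ 1 := by
        calc Real.exp (α * Q) * (1 - α * Q)
            ≤ Real.exp (α * Q) * (Real.exp (α * Q))⁻¹ := by
              apply mul_le_mul_of_nonneg_left (by linarith) hepos.le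
          _ = 1 := mul_inv_cancel₀ hepos.ne'
      have hid : (1 - α * Q) * (1 - α * Q)⁻¹ = 1 := mul_inv_cancel₀ h1S.ne'
      nlinarith
    linarith
  -- assemble
  set u : ℝ := (1 - α * Q)⁻¹ with hu'
  set v : ℝ := (1 - T)⁻¹ with hv'
  have hu : (1 - α * Q) * u = 1 := mul_inv_cancel₀ h1S.ne'
  have hv : (1 - T) * v = 1 := mul_inv_cancel₀ h1T.ne'
  have hupos : 0 < u := by rw [hu']; positivity
  have hvpos : 0 < v := by rw [hv']; positivity
  have hkey : (α * Q) ^ 2 * u ≤ T ^ 2 * v := by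
    rw [hu', hv', ← div_eq_mul_inv, ← div_eq_mul_inv, div_le_div_iff₀ h1S h1T]
    nlinarith [mul_nonneg (sub_nonneg.mpr hQT) (mul_nonneg hSpos.le hTpos.le)]
  have hpx : p x = P := hp x
  have hstep : p (x + α) ≤ P * u := by
    rw [hA]; exact mul_le_mul_of_nonneg_left hC hPpos.le
  have hfrac : (p (x + α) - p x) / α ≤ (P * u - P) / α := by
    rw [hpx]; gcongr
  have hT2 : α * (α * (n : ℝ) ^ 2 * ξ ^ 2) = T ^ 2 := by rw [hT]; ring
  have hdiv : α * (n : ℝ) ^ 2 * ξ ^ 2 / (1 - T) = α * (n : ℝ) ^ 2 * ξ ^ 2 * v := by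
    rw [hv', div_eq_mul_inv]
  have hexp : P * u - P = α * P * Q + P * ((α * Q) ^ 2 * u) := by
    linear_combination (P * (1 + α * Q)) * hu
  have hfin : (P * u - P) / α ≤ P * Q + P * (α * (n : ℝ) ^ 2 * ξ ^ 2 / (1 - T)) := by
    rw [hdiv, div_le_iff₀ hα, hexp]
    have h := mul_le_mul_of_nonneg_left hkey hPpos.le
    have hr : (P * Q + P * (α * (n : ℝ) ^ 2 * ξ ^ 2 * v)) * α
        = α * P * Q + P * (T ^ 2 * v) := by rw [← hT2]; ring
    rw [hr]
    linarith
  calc (p (x + α) - p x) / α ≤ (P * u - P) / α := hfrac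
    _ ≤ P * Q + P * (α * (n : ℝ) ^ 2 * ξ ^ 2 / (1 - T)) := hfin
    _ = deriv p x + p x * (α * (n : ℝ) ^ 2 * ξ ^ 2 / (1 - α * n * ξ)) := by
        rw [hB, hpx, hT]
end

section
/- Let p(x) = ∏_{i=1}^n (x − λ_i) with n ≥ 1 and real roots λ_1 ≥ λ_2 ≥ … ≥ λ_n all lying in [0, 1/2]. Let ε' ∈ (0, 1/2], δ' ∈ (0, 1], and set α = δ'·ε'²/(2n²). Define g̃_1(x) = (p(x+α) − p(x))/(α·p(x)) and g_1(x) = Σ_{i=1}^n 1/(x − λ_i). Then for every x ∈ [λ_1 + ε', 1]: g_1(x) ≤ g̃_1(x) ≤ g_1(x) + δ'. -/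
lemma aux_prod_one_add_ge {ι : Type*} (s : Finset ι) (f : ι → ℝ)
    (hf : ∀ i ∈ s, 0 ≤ f i) :
    1 + ∑ i ∈ s, f i ≤ ∏ i ∈ s, (1 + f i) := by
  induction s using Finset.cons_induction with
  | empty => simp
  | cons a s ha ih =>
    simp only [Finset.sum_cons, Finset.prod_cons]
    have h1 : 0 ≤ f a := hf a (Finset.mem_cons_self a s)
    have h2 : ∀ i ∈ s, 0 ≤ f i := fun i hi => hf i (Finset.mem_cons_of_mem hi)
    have h3 := ih h2
    have hs : 0 ≤ ∑ i ∈ s, f i := Finset.sum_nonneg h2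
    nlinarith [mul_le_mul_of_nonneg_left h3 (by linarith : (0:ℝ) ≤ 1 + f a)]

lemma aux_prod_one_add_le {ι : Type*} (s : Finset ι) (f : ι → ℝ)
    (hf : ∀ i ∈ s, 0 ≤ f i) (hsum : ∑ i ∈ s, f i ≤ 1) :
    ∏ i ∈ s, (1 + f i) ≤ 1 + (∑ i ∈ s, f i) + (∑ i ∈ s, f i) ^ 2 := by
  induction s using Finset.cons_induction with
  | empty => simp
  | cons a s ha ih =>
    simp only [Finset.sum_cons, Finset.prod_cons] at *
    have h1 : 0 ≤ f a := hf a (Finset.mem_cons_self a s)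
    have h2 : ∀ i ∈ s, 0 ≤ f i := fun i hi => hf i (Finset.mem_cons_of_mem hi)
    have hs : 0 ≤ ∑ i ∈ s, f i := Finset.sum_nonneg h2
    have h3 := ih h2 (by linarith)
    have hSS : (∑ i ∈ s, f i) ^ 2 ≤ ∑ i ∈ s, f i := by nlinarith
    nlinarith [mul_le_mul_of_nonneg_left h3 (by linarith : (0:ℝ) ≤ 1 + f a),
      mul_le_mul_of_nonneg_left hSS h1, mul_nonneg h1 hs]

/-- the forward-difference approximation `g̃₁` of `g₁ = p'/p` satisfies
`g₁(x) ≤ g̃₁(x) ≤ g₁(x) + δ'` on `[λ₁ + ε', 1]`. -/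
theorem g1_forward_difference_approximation
    (n : ℕ) (hn : 0 < n) (lam : Fin n → ℝ) (hlam : Antitone lam)
    (hroots : ∀ i, lam i ∈ Set.Icc (0 : ℝ) (1 / 2))
    (p : ℝ → ℝ) (hp : ∀ y : ℝ, p y = ∏ i, (y - lam i))
    (ε' δ' : ℝ) (hε' : ε' ∈ Set.Ioc (0 : ℝ) (1 / 2)) (hδ' : δ' ∈ Set.Ioc (0 : ℝ) 1)
    (α : ℝ) (hα : α = δ' * ε' ^ 2 / (2 * (n : ℝ) ^ 2))
    (x : ℝ) (hx : x ∈ Set.Icc (lam ⟨0, hn⟩ + ε') 1) :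
    (∑ i, 1 / (x - lam i)) ≤ (p (x + α) - p x) / (α * p x) ∧
      (p (x + α) - p x) / (α * p x) ≤ (∑ i, 1 / (x - lam i)) + δ' := by
  obtain ⟨hε0, hε2⟩ := hε'
  obtain ⟨hδ0, hδ1⟩ := hδ'
  have hnR : (1:ℝ) ≤ (n:ℝ) := by exact_mod_cast hn
  have hα0 : 0 < α := by
    rw [hα]; positivity
  -- each root gap is at least ε'
  have ht : ∀ i, ε' ≤ x - lam i := by
    intro i
    have h1 : lam i ≤ lam ⟨0, hn⟩ := hlam (by simp [Fin.le_def])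
    have h2 := hx.1
    linarith
  have ht0 : ∀ i, (0:ℝ) < x - lam i := fun i => lt_of_lt_of_le hε0 (ht i)
  have htne : ∀ i, x - lam i ≠ 0 := fun i => ne_of_gt (ht0 i)
  -- positivity of p x
  have hpx : 0 < p x := by
    rw [hp]; exact Finset.prod_pos (fun i _ => ht0 i)
  set S : ℝ := ∑ i, α / (x - lam i) with hS
  set P : ℝ := ∏ i, (1 + α / (x - lam i)) with hP
  have hfnn : ∀ i ∈ Finset.univ (α := Fin n), 0 ≤ α / (x - lam i) :=
    fun i _ => le_of_lt (div_pos hα0 (ht0 i))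
  have hS0 : 0 ≤ S := Finset.sum_nonneg hfnn
  -- bound each term and the sum
  have hterm : ∀ i, α / (x - lam i) ≤ α / ε' := by
    intro i
    exact div_le_div_of_nonneg_left (le_of_lt hα0) hε0 (ht i)
  have hSle : S ≤ (n:ℝ) * (α / ε') := by
    calc S ≤ ∑ _i : Fin n, α / ε' := Finset.sum_le_sum (fun i _ => hterm i)
    _ = (n:ℝ) * (α / ε') := by simp [mul_comm]
  have hSbound : S ≤ δ' * ε' / (2 * n) := by
    have : (n:ℝ) * (α / ε') = δ' * ε' / (2 * n) := by
      rw [hα]; field_simp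
    linarith [hSle, this ▸ hSle]
  have hS1 : S ≤ 1 := by
    have h1 : δ' * ε' / (2 * n) ≤ 1 * (1/2) / (2 * 1) := by
      apply div_le_div₀ (by norm_num)
      · nlinarith
      · norm_num
      · nlinarith
    linarith
  have hS2 : S ^ 2 ≤ δ' * α := by
    have h1 : S ^ 2 ≤ (δ' * ε' / (2 * n)) ^ 2 := by nlinarith
    have h2 : (δ' * ε' / (2 * n)) ^ 2 ≤ δ' * α := by
      rw [hα, div_pow]
      have he : δ' * (δ' * ε' ^ 2 / (2 * (n:ℝ) ^ 2)) = (δ' * ε') ^ 2 / (2 * (n:ℝ) ^ 2) := by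
        ring
      rw [he]
      apply div_le_div_of_nonneg_left (by positivity) (by positivity) (by nlinarith)
    linarith
  -- product identity
  have hkey : p (x + α) = p x * P := by
    rw [hp, hp, hP, ← Finset.prod_mul_distrib]
    apply Finset.prod_congr rfl
    intro i _
    have := htne i
    field_simp
    ring
  have hquot : (p (x + α) - p x) / (α * p x) = (P - 1) / α := by
    rw [hkey]
    field_simp
  have hsum : (∑ i, 1 / (x - lam i)) = S / α := by
    rw [hS, Finset.sum_div]
    apply Finset.sum_congr rfl
    intro i _
    have h := htne i
    field_simp
  have hlow := aux_prod_one_add_ge Finset.univ (fun i => α / (x - lam i)) hfnn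
  have hup := aux_prod_one_add_le Finset.univ (fun i => α / (x - lam i)) hfnn hS1
  rw [hquot, hsum]
  constructor
  · gcongr
    linarith [hlow]
  · rw [div_le_iff₀ hα0, add_mul, div_mul_cancel₀ _ (ne_of_gt hα0)]
    have : δ' * α ≤ δ' * α := le_refl _
    nlinarith [hup, hS2]
end

section
/- Fix real numbers λ_1 ≥ λ_2 ≥ … ≥ λ_n, define g_m(x) = Σ_{i=1}^n 1/(x − λ_i)^m for x > λ_1, let k ≥ 1 be an integer, let x > λ_1, set ξ = 1/(x − λ_1), and let δ > 0 satisfy k·δ·ξ < 1. Define h_{k+1}(x) = ((−1)^k/(k!·δ^k)) · Σ_{i=0}^{k} (−1)^i · C(k,i) · g_1(x + (k−i)δ). Then |h_{k+1}(x) − g_{k+1}(x)| ≤ g_{k+1}(x) · ((2k)^k/k!) · (k·δ·ξ)/(1 − k·δ·ξ). -/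
lemma fd_identity (δ : ℝ) (hδ : 0 < δ) :
    ∀ k : ℕ, ∀ a : ℝ, 0 < a →
      ∑ j ∈ Finset.range (k+1), (-1:ℝ)^j * (k.choose j) / (a + j*δ)
        = (k.factorial : ℝ) * δ^k / ∏ j ∈ Finset.range (k+1), (a + j*δ) := by
  intro k
  induction k with
  | zero => intro a ha; simp
  | succ k IH =>
    intro a ha
    have ha' : 0 < a + δ := by linarith
    set f : ℕ → ℝ := fun j => (-1:ℝ)^j * ((k+1).choose j) / (a + j*δ) with hf
    set B : ℕ → ℝ := fun j => (-1:ℝ)^j * (k.choose j) / (a + j*δ) with hB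
    have hsplit : ∑ i ∈ Finset.range (k+2), f i
        = (∑ i ∈ Finset.range (k+1), f (i+1)) + f 0 := Finset.sum_range_succ' f (k+1)
    have hterm : ∀ i ∈ Finset.range (k+1),
        f (i+1) = -((-1:ℝ)^i * (k.choose i) / ((a+δ) + i*δ)) + B (i+1) := by
      intro i _
      have hch : (((k+1).choose (i+1) : ℕ) : ℝ) = (k.choose i : ℝ) + (k.choose (i+1) : ℝ) := by
        rw [Nat.choose_succ_succ]; push_cast; ring
      simp only [hf, hB, hch]
      push_cast
      ring
    have hBsum : ∑ i ∈ Finset.range (k+1), B (i+1)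
        = (∑ i ∈ Finset.range (k+1), B i) - B 0 := by
      have h1 : ∑ i ∈ Finset.range (k+2), B i
          = (∑ i ∈ Finset.range (k+1), B (i+1)) + B 0 := Finset.sum_range_succ' B (k+1)
      have h2 : ∑ i ∈ Finset.range (k+2), B i
          = (∑ i ∈ Finset.range (k+1), B i) + B (k+1) := Finset.sum_range_succ B (k+1)
      have h3 : B (k+1) = 0 := by simp [hB, Nat.choose_succ_self]
      rw [h3, add_zero] at h2
      linarith [h1, h2]
    have hmain : ∑ i ∈ Finset.range (k+2), f i
        = (∑ i ∈ Finset.range (k+1), B i)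
          - ∑ i ∈ Finset.range (k+1), ((-1:ℝ)^i * (k.choose i) / ((a+δ) + i*δ)) := by
      rw [hsplit, Finset.sum_congr rfl hterm, Finset.sum_add_distrib, Finset.sum_neg_distrib,
        hBsum]
      have hf0 : f 0 = B 0 := by simp [hf, hB]
      rw [hf0]; ring
    show ∑ i ∈ Finset.range (k+2), f i = _
    rw [hmain, hB]
    rw [IH a ha, IH (a+δ) ha']
    set P := ∏ j ∈ Finset.range (k+1), (a + j*δ) with hP
    set Q := ∏ j ∈ Finset.range (k+1), ((a+δ) + j*δ) with hQ
    set R := ∏ j ∈ Finset.range (k+2), (a + j*δ) with hR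
    have hPpos : 0 < P := Finset.prod_pos (fun j _ => by positivity)
    have hQpos : 0 < Q := Finset.prod_pos (fun j _ => by positivity)
    have hRpos : 0 < R := Finset.prod_pos (fun j _ => by positivity)
    have hR1 : R = P * (a + (k+1)*δ) := by
      rw [hR, Finset.prod_range_succ, hP]; push_cast; ring
    have hR2 : R = Q * a := by
      rw [hR, Finset.prod_range_succ' (fun j => a + j*δ) (k+1), hQ]
      congr 1
      · exact Finset.prod_congr rfl (fun j _ => by push_cast; ring)
      · ring
    have hfac : (((k+1).factorial : ℕ) : ℝ) = (k+1) * (k.factorial : ℝ) := by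
      rw [Nat.factorial_succ]; push_cast; ring
    rw [hfac]
    field_simp
    linear_combination (δ^k * Q) * hR1 - (δ^k * P) * hR2

lemma fd_reflect (δ : ℝ) (hδ : 0 < δ) (k : ℕ) (a : ℝ) (ha : 0 < a) :
    ((-1:ℝ)^k / ((k.factorial : ℝ) * δ^k)) *
      ∑ i ∈ Finset.range (k+1), (-1:ℝ)^i * (k.choose i : ℝ) * (1 / (a + ((k - i : ℕ) : ℝ) * δ))
    = 1 / ∏ j ∈ Finset.range (k+1), (a + j*δ) := by
  have hrefl : ∑ i ∈ Finset.range (k+1), (-1:ℝ)^i * (k.choose i : ℝ) * (1 / (a + ((k - i : ℕ) : ℝ) * δ))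
      = (-1:ℝ)^k * ∑ j ∈ Finset.range (k+1), (-1:ℝ)^j * (k.choose j) / (a + j*δ) := by
    rw [Finset.mul_sum]
    rw [← Finset.sum_range_reflect (fun j => (-1:ℝ)^k * ((-1:ℝ)^j * (k.choose j) / (a + j*δ))) (k+1)]
    apply Finset.sum_congr rfl
    intro i hi
    have hik : i ≤ k := Nat.lt_succ_iff.mp (Finset.mem_range.mp hi)
    have h1 : k + 1 - 1 - i = k - i := by omega
    rw [h1]
    have h2 : (k.choose (k - i) : ℝ) = (k.choose i : ℝ) := by
      rw [Nat.choose_symm hik]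
    have h3 : (-1:ℝ)^k * (-1:ℝ)^(k-i) = (-1:ℝ)^i := by
      rw [← pow_add, show k + (k-i) = i + 2*(k-i) from by omega, pow_add, pow_mul,
        neg_one_sq, one_pow, mul_one]
    rw [h2]
    linear_combination (-((k.choose i : ℝ)) / (a + ((k-i : ℕ) : ℝ)*δ)) * h3
  rw [hrefl]
  have hfd := fd_identity δ hδ k a ha
  rw [hfd]
  have hne : ((k.factorial : ℝ) * δ^k) ≠ 0 := by positivity
  have hsq : (-1:ℝ)^k * (-1:ℝ)^k = 1 := by
    rw [← pow_add]; exact (neg_one_pow_eq_one_iff_even (by norm_num)).mpr ⟨k, by ring⟩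
  have hPne : (∏ j ∈ Finset.range (k+1), (a + j*δ)) ≠ 0 :=
    ne_of_gt (Finset.prod_pos (fun j _ => by positivity))
  rw [show ((-1:ℝ)^k / ((k.factorial:ℝ) * δ^k)) * ((-1:ℝ)^k *
      ((k.factorial:ℝ) * δ^k / ∏ j ∈ Finset.range (k+1), (a + j*δ)))
    = ((-1:ℝ)^k * (-1:ℝ)^k) * (((k.factorial:ℝ) * δ^k) / ((k.factorial:ℝ) * δ^k))
        * (1 / ∏ j ∈ Finset.range (k+1), (a + j*δ)) from by ring]
  rw [hsq, div_self hne, one_mul, one_mul]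

lemma pow_one_add_le (u : ℝ) (hu0 : 0 ≤ u) (hu1 : u ≤ 1) :
    ∀ k : ℕ, (1 + u)^k ≤ 1 + ((2:ℝ)^k - 1) * u := by
  intro k
  induction k with
  | zero => simp
  | succ k IH =>
    have h2 : (0:ℝ) < 2^k := by positivity
    have h2' : (1:ℝ) ≤ 2^k := one_le_pow₀ (by norm_num)
    calc (1+u)^(k+1) = (1+u)^k * (1+u) := by ring
    _ ≤ (1 + ((2:ℝ)^k - 1) * u) * (1+u) := by
        apply mul_le_mul_of_nonneg_right IH (by linarith)
    _ ≤ 1 + ((2:ℝ)^(k+1) - 1) * u := by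
        have hp : (2:ℝ)^(k+1) = 2^k * 2 := pow_succ 2 k
        nlinarith [mul_nonneg (mul_nonneg (by linarith [h2'] : (0:ℝ) ≤ 2^k - 1) hu0) (by linarith : (0:ℝ) ≤ 1 - u)]

lemma per_term (k : ℕ) (hk : 1 ≤ k) (δ ξ a : ℝ) (hδ : 0 < δ) (hξ : 0 < ξ)
    (ha : 1/ξ ≤ a) (hu : (k:ℝ)*δ*ξ < 1) :
    |1 / ∏ j ∈ Finset.range (k+1), (a + j*δ) - 1 / a^(k+1)|
      ≤ (1 / a^(k+1)) * (((2*(k:ℝ)))^k / k.factorial) * ((k:ℝ)*δ*ξ/(1 - (k:ℝ)*δ*ξ)) := by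
  have hkpos : (0:ℝ) < k := by exact_mod_cast hk
  set u : ℝ := (k:ℝ)*δ*ξ with hudef
  have hu0 : 0 < u := by positivity
  have ha0 : 0 < a := lt_of_lt_of_le (by positivity) ha
  set P := ∏ j ∈ Finset.range (k+1), (a + j*δ) with hPdef
  have hPpos : 0 < P := Finset.prod_pos (fun j _ => by positivity)
  set q := a^(k+1) with hqdef
  have hqpos : 0 < q := by positivity
  have h1 : q ≤ P := by
    rw [hqdef, hPdef]
    calc a^(k+1) = ∏ _j ∈ Finset.range (k+1), a := by
          rw [Finset.prod_const, Finset.card_range]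
    _ ≤ ∏ j ∈ Finset.range (k+1), (a + j*δ) := by
          apply Finset.prod_le_prod (fun j _ => le_of_lt ha0)
          intro j _
          have : (0:ℝ) ≤ (j:ℝ)*δ := by positivity
          linarith
  have hkd : (k:ℝ)*δ ≤ u*a := by
    have h1ξ : 1 ≤ a*ξ := (div_le_iff₀ hξ).mp ha
    have : u/ξ ≤ u*a := by
      rw [div_le_iff₀ hξ]
      nlinarith [mul_le_mul_of_nonneg_left h1ξ hu0.le]
    calc (k:ℝ)*δ = u/ξ := by rw [hudef]; field_simp
    _ ≤ u*a := this
  have h2 : P ≤ q * (1+u)^k := by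
    rw [hPdef, Finset.prod_range_succ' (fun j => a + (j:ℝ)*δ) k]
    simp only [Nat.cast_zero, zero_mul, add_zero]
    have hb : ∏ j ∈ Finset.range k, (a + ((j+1 : ℕ):ℝ)*δ) ≤ (a*(1+u))^k := by
      calc ∏ j ∈ Finset.range k, (a + ((j+1 : ℕ):ℝ)*δ)
          ≤ ∏ _j ∈ Finset.range k, (a*(1+u)) := by
            apply Finset.prod_le_prod
            · intro j _; positivity
            · intro j hj
              have hj' : ((j+1 : ℕ):ℝ) ≤ (k:ℝ) := by
                have := Finset.mem_range.mp hj; exact_mod_cast Nat.succ_le_of_lt this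
              have : ((j+1 : ℕ):ℝ)*δ ≤ (k:ℝ)*δ := by nlinarith
              nlinarith
      _ = (a*(1+u))^k := by rw [Finset.prod_const, Finset.card_range]
    calc (∏ j ∈ Finset.range k, (a + ((j+1 : ℕ):ℝ)*δ)) * a ≤ (a*(1+u))^k * a := by
          apply mul_le_mul_of_nonneg_right hb (le_of_lt ha0)
    _ = q * (1+u)^k := by rw [hqdef, mul_pow]; ring
  have h3 : (1+u)^k ≤ 1 + ((2:ℝ)^k - 1) * u := pow_one_add_le u hu0.le (by linarith) k
  have habs : |1/P - 1/q| = 1/q - 1/P := by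
    rw [abs_sub_comm, abs_of_nonneg]
    have := one_div_le_one_div_of_le hqpos h1
    linarith
  rw [habs]
  have step1 : 1/q - 1/P ≤ ((1+u)^k - 1)/q := by
    have e1 : 1/q - 1/P = (P - q)/(q*P) := by field_simp
    have e2 : (P - q)/(q*P) ≤ (P - q)/(q*q) := by
      apply div_le_div_of_nonneg_left (by linarith) (by positivity)
      nlinarith
    have e3 : (P - q)/(q*q) ≤ (q*(1+u)^k - q)/(q*q) := by
      apply div_le_div_of_nonneg_right ?_ (by positivity)
      linarith
    have e4 : (q*(1+u)^k - q)/(q*q) = ((1+u)^k - 1)/q := by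
      field_simp
    linarith [e1, e2, e3, e4]
  have step2 : ((1+u)^k - 1)/q ≤ (((2:ℝ)^k - 1)*u)/q := by
    apply div_le_div_of_nonneg_right ?_ hqpos.le
    linarith
  have step3 : ((2:ℝ)^k - 1)*u ≤ ((2*(k:ℝ))^k / k.factorial) * (u/(1-u)) := by
    have hfacpos : (0:ℝ) < k.factorial := by exact_mod_cast k.factorial_pos
    have e1 : (2:ℝ)^k - 1 ≤ (2*(k:ℝ))^k / k.factorial := by
      rw [le_div_iff₀ hfacpos]
      have hkk : (k.factorial : ℝ) ≤ (k:ℝ)^k := by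
        exact_mod_cast Nat.factorial_le_pow k
      have h2k : (0:ℝ) < 2^k := by positivity
      calc ((2:ℝ)^k - 1) * k.factorial ≤ (2:ℝ)^k * k.factorial := by nlinarith
      _ ≤ (2:ℝ)^k * (k:ℝ)^k := by nlinarith
      _ = (2*(k:ℝ))^k := by rw [mul_pow]
    have e2 : u ≤ u/(1-u) := by
      rw [le_div_iff₀ (by linarith)]
      nlinarith
    have e3 : (0:ℝ) ≤ (2*(k:ℝ))^k / k.factorial := by positivity
    calc ((2:ℝ)^k - 1)*u ≤ ((2*(k:ℝ))^k / k.factorial) * u := by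
          apply mul_le_mul_of_nonneg_right e1 hu0.le
    _ ≤ ((2*(k:ℝ))^k / k.factorial) * (u/(1-u)) := by
          apply mul_le_mul_of_nonneg_left e2 e3
  calc 1/q - 1/P ≤ (((2:ℝ)^k - 1)*u)/q := le_trans step1 step2
  _ ≤ (((2*(k:ℝ))^k / k.factorial) * (u/(1-u)))/q := by
      apply div_le_div_of_nonneg_right step3 hqpos.le
  _ = (1/q) * ((2*(k:ℝ))^k / k.factorial) * (u/(1-u)) := by ring

/-- error bound for the k-th order finite-difference approximation
`h_{k+1}` of the moment function `g_{k+1}` built from exact values of `g₁`. -/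
theorem finite_difference_moment_error
    (n : ℕ) (hn : 0 < n) (lam : Fin n → ℝ) (hlam : Antitone lam)
    (g : ℕ → ℝ → ℝ) (hg : ∀ (m : ℕ) (y : ℝ), g m y = ∑ i, 1 / (y - lam i) ^ m)
    (k : ℕ) (hk : 1 ≤ k) (x : ℝ) (hx : lam ⟨0, hn⟩ < x)
    (ξ : ℝ) (hξ : ξ = 1 / (x - lam ⟨0, hn⟩))
    (δ : ℝ) (hδ : 0 < δ) (hsmall : (k : ℝ) * δ * ξ < 1)
    (h : ℝ) (hh : h = ((-1 : ℝ) ^ k / ((k.factorial : ℝ) * δ ^ k)) *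
        ∑ i ∈ Finset.range (k + 1),
          (-1 : ℝ) ^ i * (k.choose i : ℝ) * g 1 (x + ((k - i : ℕ) : ℝ) * δ)) :
    |h - g (k + 1) x| ≤
      g (k + 1) x * ((2 * (k : ℝ)) ^ k / (k.factorial : ℝ)) *
        ((k : ℝ) * δ * ξ / (1 - (k : ℝ) * δ * ξ)) := by
  have hx0 : 0 < x - lam ⟨0, hn⟩ := by linarith
  have hξpos : 0 < ξ := by rw [hξ]; positivity
  have hlam' : ∀ t : Fin n, lam t ≤ lam ⟨0, hn⟩ := fun t => hlam (by simp [Fin.le_def])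
  have ha : ∀ t : Fin n, 0 < x - lam t := fun t => by
    have := hlam' t; linarith
  have hai : ∀ t : Fin n, 1/ξ ≤ x - lam t := fun t => by
    rw [hξ, one_div_one_div]
    have := hlam' t; linarith
  have hA : h = ∑ t, 1 / ∏ j ∈ Finset.range (k+1), ((x - lam t) + j*δ) := by
    rw [hh]
    have hterm : ∀ i ∈ Finset.range (k+1),
        (-1:ℝ)^i * (k.choose i : ℝ) * g 1 (x + ((k - i : ℕ):ℝ)*δ)
        = ∑ t, (-1:ℝ)^i * (k.choose i : ℝ) * (1 / ((x - lam t) + ((k - i : ℕ):ℝ)*δ)) := by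
      intro i _
      rw [hg, Finset.mul_sum]
      apply Finset.sum_congr rfl
      intro t _
      rw [pow_one]
      ring_nf
    rw [Finset.sum_congr rfl hterm, Finset.sum_comm, Finset.mul_sum]
    apply Finset.sum_congr rfl
    intro t _
    exact fd_reflect δ hδ k (x - lam t) (ha t)
  rw [hA, hg]
  rw [← Finset.sum_sub_distrib]
  calc |∑ t, (1 / ∏ j ∈ Finset.range (k+1), ((x - lam t) + j*δ) - 1 / (x - lam t)^(k+1))|
      ≤ ∑ t, |1 / ∏ j ∈ Finset.range (k+1), ((x - lam t) + j*δ) - 1 / (x - lam t)^(k+1)| :=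
        Finset.abs_sum_le_sum_abs _ _
  _ ≤ ∑ t, (1 / (x - lam t)^(k+1)) * ((2*(k:ℝ))^k / (k.factorial : ℝ))
        * ((k:ℝ)*δ*ξ/(1 - (k:ℝ)*δ*ξ)) :=
      Finset.sum_le_sum (fun t _ =>
        per_term k hk δ ξ (x - lam t) hδ hξpos (hai t) hsmall)
  _ = (∑ t, 1 / (x - lam t)^(k+1)) * ((2*(k:ℝ))^k / (k.factorial : ℝ))
        * ((k:ℝ)*δ*ξ/(1 - (k:ℝ)*δ*ξ)) := by
      rw [← Finset.sum_mul, ← Finset.sum_mul]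
end

section
/- Fix real numbers λ_1 ≥ λ_2 ≥ … ≥ λ_n with n ≥ 1, an integer k ≥ 2, x > λ_1, and define g_m(x) = Σ_{i=1}^n 1/(x − λ_i)^m. Let a, b be real numbers with |a − g_{k−1}(x)| ≤ (1/4)·g_{k−1}(x) and |b − g_k(x)| ≤ (1/4)·g_k(x). Then (x − λ_1)/(8·n^{1/k}) ≤ (1/(4·n^{1/k}))·(a/b) ≤ (x − λ_1)/2. -/
set_option maxHeartbeats 1000000 in
/-- the update step built from (1 ± 1/4)-approximations of the moments
satisfies `(x − λ₁)/(8 n^{1/k}) ≤ (1/(4 n^{1/k})) (a/b) ≤ (x − λ₁)/2`. -/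
theorem update_step_bounds
    (n : ℕ) (hn : 0 < n) (lam : Fin n → ℝ) (hlam : Antitone lam)
    (k : ℕ) (hk : 2 ≤ k) (x : ℝ) (hx : lam ⟨0, hn⟩ < x)
    (g : ℕ → ℝ → ℝ) (hg : ∀ (m : ℕ) (y : ℝ), g m y = ∑ i, 1 / (y - lam i) ^ m)
    (a b : ℝ)
    (ha : |a - g (k - 1) x| ≤ (1 / 4) * g (k - 1) x)
    (hb : |b - g k x| ≤ (1 / 4) * g k x) :
    (x - lam ⟨0, hn⟩) / (8 * (n : ℝ) ^ ((1 : ℝ) / k)) ≤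
        (1 / (4 * (n : ℝ) ^ ((1 : ℝ) / k))) * (a / b) ∧
      (1 / (4 * (n : ℝ) ^ ((1 : ℝ) / k))) * (a / b) ≤ (x - lam ⟨0, hn⟩) / 2 := by
  have hk1 : (1 : ℝ) < (k : ℝ) := by exact_mod_cast lt_of_lt_of_le one_lt_two hk
  have hkR : ((k : ℝ)) ≠ 0 := by positivity
  have hk1' : (k : ℝ) - 1 ≠ 0 := by linarith
  set i0 : Fin n := ⟨0, hn⟩ with hi0
  set D : ℝ := x - lam i0 with hDdef
  have hDpos : 0 < D := sub_pos.mpr hx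
  have hd : ∀ i : Fin n, D ≤ x - lam i := by
    intro i
    have : lam i ≤ lam i0 := hlam (by simp [hi0, Fin.le_def])
    simp only [hDdef]; linarith
  have hdpos : ∀ i : Fin n, 0 < x - lam i := fun i => lt_of_lt_of_le hDpos (hd i)
  set N : ℝ := (n : ℝ) ^ ((1 : ℝ) / k) with hNdef
  have hNpos : 0 < N := Real.rpow_pos_of_pos (by exact_mod_cast hn) _
  set G1 : ℝ := g (k - 1) x with hG1def
  set Gk : ℝ := g k x with hGkdef
  have hG1pos : 0 < G1 := by
    rw [hG1def, hg]
    exact Finset.sum_pos (fun i _ => by have := hdpos i; positivity) ⟨i0, Finset.mem_univ _⟩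
  have hGkpos : 0 < Gk := by
    rw [hGkdef, hg]
    exact Finset.sum_pos (fun i _ => by have := hdpos i; positivity) ⟨i0, Finset.mem_univ _⟩
  obtain ⟨ha1, ha2⟩ := abs_le.mp ha
  obtain ⟨hb1, hb2⟩ := abs_le.mp hb
  have hal : 3 / 4 * G1 ≤ a := by linarith
  have hau : a ≤ 5 / 4 * G1 := by linarith
  have hbl : 3 / 4 * Gk ≤ b := by linarith
  have hbu : b ≤ 5 / 4 * Gk := by linarith
  have hapos : 0 < a := lt_of_lt_of_le (by linarith) hal
  have hbpos : 0 < b := lt_of_lt_of_le (by linarith) hbl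
  -- lower: G1 ≥ D * Gk
  have hlow : D * Gk ≤ G1 := by
    rw [hG1def, hGkdef, hg, hg, Finset.mul_sum]
    apply Finset.sum_le_sum
    intro i _
    have hdi := hdpos i
    have hdi' := hd i
    have ek : (x - lam i) ^ k = (x - lam i) ^ (k - 1) * (x - lam i) := by
      rw [← pow_succ]; congr 1; omega
    rw [ek]
    have e : D * (1 / ((x - lam i) ^ (k - 1) * (x - lam i))) =
        (D / (x - lam i)) * (1 / (x - lam i) ^ (k - 1)) := by
      field_simp
    rw [e]
    have h1 : D / (x - lam i) ≤ 1 := (div_le_one hdi).mpr hdi'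
    nlinarith [pow_pos hdi (k - 1), one_div_pos.mpr (pow_pos hdi (k - 1))]
  -- upper: G1 ≤ N * D * Gk
  have hhigh : G1 ≤ N * D * Gk := by
    have hpq : ((k : ℝ) / ((k : ℝ) - 1)).HolderConjugate (k : ℝ) :=
      (Real.HolderConjugate.conjExponent hk1).symm
    have holder := Real.inner_le_Lp_mul_Lq_of_nonneg Finset.univ
      (f := fun i : Fin n => 1 / (x - lam i) ^ (k - 1))
      (g := fun _ : Fin n => (1 : ℝ)) hpq
      (fun i _ => by have := hdpos i; positivity) (fun i _ => by norm_num)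
    have hfp : ∀ i : Fin n,
        (1 / (x - lam i) ^ (k - 1)) ^ ((k : ℝ) / ((k : ℝ) - 1)) = 1 / (x - lam i) ^ k := by
      intro i
      have hdi := hdpos i
      rw [one_div, ← Real.rpow_natCast (x - lam i) (k - 1), ← Real.rpow_neg hdi.le,
        ← Real.rpow_natCast (x - lam i) k, ← Real.rpow_mul hdi.le, one_div,
        ← Real.rpow_neg hdi.le]
      congr 1
      have hc : ((k - 1 : ℕ) : ℝ) = (k : ℝ) - 1 := by
        rw [Nat.cast_sub (by omega)]; norm_num
      rw [hc]
      field_simp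
    have e1 : ∑ i : Fin n, (1 / (x - lam i) ^ (k - 1)) * 1 = G1 := by
      rw [hG1def, hg]; simp
    have e2 : ∑ _i : Fin n, ((1 : ℝ)) ^ (k : ℝ) = (n : ℝ) := by
      simp [Real.one_rpow]
    have e3 : ∑ i : Fin n, (1 / (x - lam i) ^ (k - 1)) ^ ((k : ℝ) / ((k : ℝ) - 1)) = Gk := by
      rw [hGkdef, hg]; exact Finset.sum_congr rfl fun i _ => hfp i
    rw [e1, e2, e3] at holder
    have hinv : 1 / ((k : ℝ) / ((k : ℝ) - 1)) = 1 - 1 / (k : ℝ) := by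
      rw [one_div_div]; field_simp
    rw [hinv] at holder
    -- Gk ^ (1 - 1/k) ≤ Gk * D
    have hsingle : (1 / D) ^ k ≤ Gk := by
      rw [hGkdef, hg]
      have := Finset.single_le_sum (f := fun i : Fin n => 1 / (x - lam i) ^ k)
        (fun i _ => by have := hdpos i; positivity) (Finset.mem_univ i0)
      calc (1 / D) ^ k = 1 / (x - lam i0) ^ k := by rw [one_div_pow, hDdef]
        _ ≤ _ := this
    have hneg : Gk ^ (-(1 / (k : ℝ))) ≤ D := by
      have h2 : ((1 / D) ^ k : ℝ) ^ (-(1 / (k : ℝ))) = D := by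
        rw [← Real.rpow_natCast (1 / D) k, ← Real.rpow_mul (by positivity)]
        rw [show (k : ℝ) * -(1 / (k : ℝ)) = -1 by field_simp]
        rw [Real.rpow_neg_one, one_div, inv_inv]
      calc Gk ^ (-(1 / (k : ℝ)))
          ≤ ((1 / D) ^ k : ℝ) ^ (-(1 / (k : ℝ))) :=
            Real.rpow_le_rpow_of_nonpos (by positivity) hsingle (neg_nonpos.mpr (by positivity))
        _ = D := h2
    have hsplit : Gk ^ (1 - 1 / (k : ℝ)) = Gk * Gk ^ (-(1 / (k : ℝ))) := by
      rw [show (1 : ℝ) - 1 / (k : ℝ) = 1 + -(1 / (k : ℝ)) by ring,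
        Real.rpow_add hGkpos, Real.rpow_one]
    have hGle : Gk ^ (1 - 1 / (k : ℝ)) ≤ Gk * D := by
      rw [hsplit]
      exact mul_le_mul_of_nonneg_left hneg hGkpos.le
    calc G1 ≤ Gk ^ (1 - 1 / (k : ℝ)) * N := holder
      _ ≤ (Gk * D) * N := mul_le_mul_of_nonneg_right hGle hNpos.le
      _ = N * D * Gk := by ring
  -- ratio bounds
  have hrlow : D ≤ G1 / Gk := (le_div_iff₀ hGkpos).mpr (by linarith)
  have hrhigh : G1 / Gk ≤ N * D := (div_le_iff₀ hGkpos).mpr hhigh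
  have habu : a / b ≤ 5 / 3 * (N * D) := by
    have h1 : a / b ≤ (5 / 4 * G1) / (3 / 4 * Gk) :=
      div_le_div₀ (by positivity) hau (by positivity) hbl
    have h2 : (5 / 4 * G1) / (3 / 4 * Gk) = 5 / 3 * (G1 / Gk) := by
      rw [mul_div_mul_comm]; norm_num
    rw [h2] at h1
    have : 5 / 3 * (G1 / Gk) ≤ 5 / 3 * (N * D) := by linarith
    linarith
  have habl : 3 / 5 * D ≤ a / b := by
    have h1 : (3 / 4 * G1) / (5 / 4 * Gk) ≤ a / b :=
      div_le_div₀ hapos.le hal hbpos hbu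
    have h2 : (3 / 4 * G1) / (5 / 4 * Gk) = 3 / 5 * (G1 / Gk) := by
      rw [mul_div_mul_comm]; norm_num
    rw [h2] at h1
    have : 3 / 5 * D ≤ 3 / 5 * (G1 / Gk) := by linarith
    linarith
  constructor
  · have h1 : (1 / (4 * N)) * (3 / 5 * D) ≤ (1 / (4 * N)) * (a / b) :=
      mul_le_mul_of_nonneg_left habl (by positivity)
    have h2 : D / (8 * N) ≤ (1 / (4 * N)) * (3 / 5 * D) := by
      have e : (1 / (4 * N)) * (3 / 5 * D) = 3 / 20 * (D / N) := by ring
      have e2 : D / (8 * N) = 1 / 8 * (D / N) := by ring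
      have hDN : 0 < D / N := by positivity
      rw [e, e2]
      linarith
    linarith
  · have h1 : (1 / (4 * N)) * (a / b) ≤ (1 / (4 * N)) * (5 / 3 * (N * D)) :=
      mul_le_mul_of_nonneg_left habu (by positivity)
    have h2 : (1 / (4 * N)) * (5 / 3 * (N * D)) = 5 / 12 * D := by
      field_simp; ring
    linarith
end
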